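/- Set ρ = cos²θ, g_ρ(x₂) = F(x₂ tan θ)^ρ, let χ(t) = min(1, max(0, 2 − |t|)) be the piecewise-linear cutoff (so |χ'| ≤ 1 almost everywhere), and for n > 0 define I₂ = (1/n) ∫_ℝ χ(x₂/n) χ'(x₂/n) · ( 2 g_ρ(x₂) g_ρ'(x₂) F(x₂ tan θ) − g_ρ(x₂)² e^{-α|x₂| tan θ} cot θ ) dx₂. Then for every n > 0, |I₂| ≤ (72 cos²θ + 84 cos⁴θ) / ( 36 α^{2cos²θ+1} sin²θ · n ). -/

import Mathlib

open Real MeasureTheory Set Filter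

/-- `F α t = ∫_{-∞}^t e^{-α|x|} dx`. -/
noncomputable def F (α t : ℝ) : ℝ := ∫ x in Iio t, exp (-α * |x|)

/-- The half-plane-like domain `Ω = {(x₁,x₂) : x₁ < x₂ tan θ}`. -/
def Omg (θ : ℝ) : Set (ℝ × ℝ) := {p | p.1 < p.2 * tan θ}

/-- The functional `R(g) = ∫ g'·(g'·F(x tanθ) − g·e^{-α|x|tanθ}·cot θ) dx`. -/
noncomputable def Rfun (α θ : ℝ) (g : ℝ → ℝ) : ℝ :=
  ∫ x : ℝ, deriv g x *
    (deriv g x * F α (x * tan θ) - g x * exp (-α * |x| * tan θ) * cot θ)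

/-- The quantity `Λ(θ)` from the upper bound for the lowest eigenvalue. -/
noncomputable def Lam (θ : ℝ) : ℝ :=
  3 * cos θ ^ 6 * ((2:ℝ) ^ (2 * cos θ ^ 2) - 1) ^ 2 /
    (2 * (1 + 2 * cos θ ^ 2) ^ 3 *
      (108 + 180 * cos θ ^ 2 - 132 * cos θ ^ 4 + 45 * cos θ ^ 6 - 5 * cos θ ^ 8))

section helperlemmas

open scoped Topology

lemma exp_integral_Ioi (b a : ℝ) (hb : 0 < b) : ∫ x in Ioi a, exp (-b*x) = exp (-b*a)/b := by
  have hd : ∀ x ∈ Ici a, HasDerivAt (fun u : ℝ => -exp (-b*u) / b) (exp (-b*x)) x := by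
    intro x _
    have h := (((hasDerivAt_id x).const_mul (-b)).exp).neg.div_const b
    refine h.congr_deriv ?_
    simp only [id_eq, mul_one]
    field_simp
  have ht : Tendsto (fun u : ℝ => -exp (-b*u) / b) atTop (𝓝 (-0/b)) := by
    refine Tendsto.div_const (Tendsto.neg ?_) _
    exact tendsto_exp_atBot.comp (tendsto_id.const_mul_atTop_of_neg (neg_neg_iff_pos.2 hb))
  have := integral_Ioi_of_hasDerivAt_of_nonneg' hd (fun x _ => (exp_pos _).le) ht
  rw [this]; field_simp; ring

lemma exp_integrableOn_Iic {b : ℝ} (hb : 0 < b) (a : ℝ) :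
    IntegrableOn (fun x : ℝ => exp (b*x)) (Iic a) := by
  have h : IntegrableOn (fun x : ℝ => exp (b*(-x))) (Ici (-a)) := by
    rw [integrableOn_Ici_iff_integrableOn_Ioi]
    exact (exp_neg_integrableOn_Ioi _ hb).congr_fun (fun x _ => by ring_nf) measurableSet_Ioi
  have h_map_neg : ((volume : Measure ℝ).restrict (Ici (-a))).map Neg.neg
      = (volume : Measure ℝ).restrict (Iic a) := by
    conv => rhs; rw [← Measure.map_neg_eq_self (volume : Measure ℝ),
      measurableEmbedding_neg.restrict_map]
    simp
  rw [IntegrableOn, ← h_map_neg, measurableEmbedding_neg.integrable_map_iff]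
  exact h

lemma exp_integral_Iic {b : ℝ} (hb : 0 < b) (a : ℝ) :
    ∫ x in Iic a, exp (b*x) = exp (b*a)/b := by
  have h := integral_comp_neg_Iic a (fun y => exp (-b*y))
  simp only [mul_neg, neg_neg, ← neg_mul] at h
  rw [h, exp_integral_Ioi _ _ hb]
  ring_nf

lemma integrable_exp_neg_abs {α : ℝ} (hα : 0 < α) :
    Integrable (fun x : ℝ => exp (-α * |x|)) := by
  rw [← integrableOn_univ, ← Iic_union_Ioi (a := (0:ℝ))]
  refine IntegrableOn.union ?_ ?_
  · refine (exp_integrableOn_Iic hα 0).congr_fun (fun x hx => ?_) measurableSet_Iic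
    rw [abs_of_nonpos (mem_Iic.1 hx)]; ring_nf
  · refine (exp_neg_integrableOn_Ioi 0 hα).congr_fun (fun x hx => ?_) measurableSet_Ioi
    rw [abs_of_pos (mem_Ioi.1 hx)]

lemma F_of_nonpos {α : ℝ} (hα : 0 < α) {t : ℝ} (ht : t ≤ 0) : F α t = exp (α*t)/α := by
  have h1 : F α t = ∫ x in Iic t, exp (α * x) := by
    rw [F, ← setIntegral_congr_set Iio_ae_eq_Iic]
    refine setIntegral_congr_fun measurableSet_Iio (fun x hx => ?_)
    rw [abs_of_nonpos (le_of_lt (lt_of_lt_of_le (mem_Iio.1 hx) ht))]; ring_nf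
  rw [h1, exp_integral_Iic hα]

lemma F_of_pos {α : ℝ} (hα : 0 < α) {t : ℝ} (ht : 0 < t) :
    F α t = (2 - exp (-(α*t)))/α := by
  have hsplit : Iio t = Iio 0 ∪ Ico 0 t := by
    ext x; simp only [mem_Iio, mem_union, mem_Ico]
    constructor
    · intro h; rcases lt_or_ge x 0 with h'|h'
      · exact Or.inl h'
      · exact Or.inr ⟨h', h⟩
    · rintro (h|⟨_, h⟩); exacts [lt_of_lt_of_le h ht.le, h]
  have hdisj : Disjoint (Iio (0:ℝ)) (Ico 0 t) :=
    disjoint_left.2 fun x hx hx' => absurd hx'.1 (not_le.2 hx)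
  have hint1 : IntegrableOn (fun x : ℝ => exp (-α * |x|)) (Iio 0) :=
    (integrable_exp_neg_abs hα).integrableOn
  have hint2 : IntegrableOn (fun x : ℝ => exp (-α * |x|)) (Ico 0 t) :=
    (integrable_exp_neg_abs hα).integrableOn
  rw [F, hsplit, setIntegral_union hdisj measurableSet_Ico hint1 hint2]
  have e1 : ∫ x in Iio (0:ℝ), exp (-α * |x|) = 1/α := by
    have := F_of_nonpos hα (le_refl (0:ℝ))
    rw [F] at this; rw [this]; simp
  have key : ∫ x in (0:ℝ)..t, exp (-α*|x|) = (-exp (-(α*t))/α) - (-exp (-(α*0))/α) := by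
    apply intervalIntegral.integral_eq_sub_of_hasDerivAt
    · intro x hx
      rw [uIcc_of_le ht.le] at hx
      have h : HasDerivAt (fun u : ℝ => -(α*u)) (-α) x := by
        simpa [Pi.neg_def] using ((hasDerivAt_id x).const_mul α).neg
      have h2 := h.exp.neg.div_const α
      refine h2.congr_deriv ?_
      rw [abs_of_nonneg hx.1]; field_simp
    · exact (integrable_exp_neg_abs hα).intervalIntegrable
  have e2 : ∫ x in Ico (0:ℝ) t, exp (-α * |x|) = (1 - exp (-(α*t)))/α := by
    rw [setIntegral_congr_set Ico_ae_eq_Ioc, ← intervalIntegral.integral_of_le ht.le, key,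
      mul_zero, neg_zero, exp_zero]
    ring
  rw [e1, e2]; ring

lemma F_hasDeriv {α : ℝ} (hα : 0 < α) (t : ℝ) : HasDerivAt (F α) (exp (-α * |t|)) t := by
  have hInt := integrable_exp_neg_abs hα
  have hrepr : ∀ u : ℝ, F α u = F α 0 + ∫ x in (0:ℝ)..u, exp (-α * |x|) := by
    intro u
    have h := intervalIntegral.integral_Iic_sub_Iic (hInt.integrableOn (s := Iic 0))
      (hInt.integrableOn (s := Iic u))
    have e : ∀ v : ℝ, F α v = ∫ x in Iic v, exp (-α * |x|) := fun v =>
      setIntegral_congr_set Iio_ae_eq_Iic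
    rw [e u, e 0, ← h]; ring
  have : HasDerivAt (fun u : ℝ => F α 0 + ∫ x in (0:ℝ)..u, exp (-α * |x|))
      (exp (-α * |t|)) t := by
    refine HasDerivAt.const_add _ ?_
    refine intervalIntegral.integral_hasDerivAt_right hInt.intervalIntegrable ?_ ?_
    · exact (Continuous.stronglyMeasurableAtFilter (by continuity) _ _)
    · exact Continuous.continuousAt (by continuity)
  exact this.congr_of_eventuallyEq (Eventually.of_forall hrepr)

lemma F_pos {α : ℝ} (hα : 0 < α) (t : ℝ) : 0 < F α t := by
  rcases le_or_gt t 0 with ht | ht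
  · rw [F_of_nonpos hα ht]; positivity
  · rw [F_of_pos hα ht]
    have h1 : exp (-(α*t)) < 1 := exp_lt_one_iff.2 (by nlinarith)
    apply div_pos (by linarith) hα

lemma F_le {α : ℝ} (hα : 0 < α) (t : ℝ) : F α t ≤ 2/α := by
  rcases le_or_gt t 0 with ht | ht
  · rw [F_of_nonpos hα ht]
    have h1 : exp (α*t) ≤ 1 := exp_le_one_iff.2 (by nlinarith)
    exact (div_le_div_iff_of_pos_right hα).2 (by linarith)
  · rw [F_of_pos hα ht]
    have h1 : 0 < exp (-(α*t)) := exp_pos _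
    exact (div_le_div_iff_of_pos_right hα).2 (by linarith)

lemma chi_bound (t : ℝ) : |min 1 (max 0 (2 - |t|))| ≤ 1 := by
  rw [abs_le]
  exact ⟨le_trans (by norm_num) (le_min zero_le_one (le_max_left _ _)),
    min_le_left _ _⟩

lemma chi_deriv_bound {t : ℝ} (h1 : |t| ≠ 1) (h2 : |t| ≠ 2) :
    |deriv (fun u : ℝ => min 1 (max 0 (2 - |u|))) t| ≤ 1 := by
  rcases lt_or_gt_of_ne h1 with hlt | hgt
  · have hev : (fun u : ℝ => min 1 (max 0 (2 - |u|))) =ᶠ[𝓝 t] fun _ => 1 := by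
      filter_upwards [(isOpen_lt continuous_abs continuous_const).eventually_mem
        (show t ∈ {u : ℝ | |u| < 1} from hlt)] with u hu
      rw [max_eq_right (by linarith), min_eq_left (by linarith)]
    rw [hev.deriv_eq, deriv_const]; norm_num
  · rcases lt_or_gt_of_ne h2 with hlt2 | hgt2
    · rcases lt_trichotomy t 0 with hneg | rfl | hpos
      · have hev : (fun u : ℝ => min 1 (max 0 (2 - |u|))) =ᶠ[𝓝 t] fun u => 2 + u := by
          filter_upwards [((isOpen_lt continuous_const continuous_abs).inter
            (isOpen_lt continuous_abs continuous_const)).eventually_mem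
            (show t ∈ {u : ℝ | 1 < |u|} ∩ {u : ℝ | |u| < 2} from ⟨hgt, hlt2⟩),
            isOpen_Iio.eventually_mem (show t ∈ Iio (0:ℝ) from hneg)] with u hu hu2
          obtain ⟨ha, hb⟩ := hu
          simp only [mem_setOf_eq] at ha hb
          simp only [mem_Iio] at hu2
          rw [abs_of_neg hu2] at ha hb ⊢
          rw [max_eq_right (by linarith), min_eq_right (by linarith)]
          ring
        rw [hev.deriv_eq]
        have hd : HasDerivAt (fun u : ℝ => 2 + u) 1 t := by
          simpa using (hasDerivAt_id t).const_add 2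
        rw [hd.deriv]; norm_num
      · norm_num at hgt
      · have hev : (fun u : ℝ => min 1 (max 0 (2 - |u|))) =ᶠ[𝓝 t] fun u => 2 - u := by
          filter_upwards [((isOpen_lt continuous_const continuous_abs).inter
            (isOpen_lt continuous_abs continuous_const)).eventually_mem
            (show t ∈ {u : ℝ | 1 < |u|} ∩ {u : ℝ | |u| < 2} from ⟨hgt, hlt2⟩),
            isOpen_Ioi.eventually_mem (show t ∈ Ioi (0:ℝ) from hpos)] with u hu hu2
          obtain ⟨ha, hb⟩ := hu
          simp only [mem_setOf_eq] at ha hb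
          simp only [mem_Ioi] at hu2
          rw [abs_of_pos hu2] at ha hb ⊢
          rw [max_eq_right (by linarith), min_eq_right (by linarith)]
        rw [hev.deriv_eq]
        have hd : HasDerivAt (fun u : ℝ => 2 - u) (-1) t := by
          simpa using (hasDerivAt_id t).const_sub 2
        rw [hd.deriv]; norm_num
    · have hev : (fun u : ℝ => min 1 (max 0 (2 - |u|))) =ᶠ[𝓝 t] fun _ => 0 := by
        filter_upwards [(isOpen_lt continuous_const continuous_abs).eventually_mem
          (show t ∈ {u : ℝ | 2 < |u|} from hgt2)] with u hu
        rw [max_eq_left (by linarith), min_eq_right (by norm_num)]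
      rw [hev.deriv_eq, deriv_const]; norm_num

end helperlemmas

set_option maxHeartbeats 1000000 in
/-- bound on the error term `I₂` for `ρ = cos²θ` and the
piecewise-linear cutoff `χ(t) = min(1, max(0, 2 − |t|))`. -/
theorem I2_bound (α θ : ℝ) (hα : 0 < α) (hθ : θ ∈ Ioo 0 (π/2))
    (n : ℝ) (hn : 0 < n) :
    ∀ χ : ℝ → ℝ, χ = (fun t => min 1 (max 0 (2 - |t|))) →
      |(1 / n) * ∫ x : ℝ, χ (x / n) * deriv χ (x / n) *
          (2 * F α (x * tan θ) ^ (cos θ ^ 2)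
              * deriv (fun y => F α (y * tan θ) ^ (cos θ ^ 2)) x * F α (x * tan θ)
            - (F α (x * tan θ) ^ (cos θ ^ 2)) ^ 2 * exp (-α * |x| * tan θ) * cot θ)|
        ≤ (72 * cos θ ^ 2 + 84 * cos θ ^ 4)
            / (36 * α ^ (2 * cos θ ^ 2 + 1) * sin θ ^ 2 * n) := by
  obtain ⟨hθ0, hθp⟩ := hθ
  rintro χ rfl
  have hπ : θ < π := lt_trans hθp (by linarith [pi_pos])
  have hcos : 0 < cos θ := cos_pos_of_mem_Ioo ⟨by linarith [pi_pos], hθp⟩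
  have hsin : 0 < sin θ := sin_pos_of_pos_of_lt_pi hθ0 hπ
  have htaneq : tan θ = sin θ / cos θ := tan_eq_sin_div_cos θ
  have htan : 0 < tan θ := by rw [htaneq]; positivity
  have hcoteq : cot θ = cos θ / sin θ := cot_eq_cos_div_sin θ
  set s := cos θ ^ 2 with hs
  have hs0 : 0 < s := by positivity
  have hs1 : s ≤ 1 := by
    rw [hs]; nlinarith [cos_le_one θ, neg_one_le_cos θ]
  set c : ℝ := 2 * s * tan θ - cot θ with hc
  have hFp : ∀ u, 0 < F α u := F_pos hα
  have habs : ∀ x : ℝ, |x * tan θ| = |x| * tan θ := fun x => by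
    rw [abs_mul, abs_of_pos htan]
  have hderivg : ∀ x : ℝ, deriv (fun y => F α (y * tan θ) ^ s) x
      = s * F α (x * tan θ) ^ (s - 1) * (exp (-α * |x * tan θ|) * tan θ) := by
    intro x
    have h1 : HasDerivAt (fun y : ℝ => y * tan θ) (tan θ) x := hasDerivAt_mul_const _
    have h2 := (F_hasDeriv hα (x * tan θ)).comp x h1
    have h3 : HasDerivAt (fun z : ℝ => z ^ s) (s * F α (x * tan θ) ^ (s - 1))
        (F α (x * tan θ)) := Real.hasDerivAt_rpow_const (Or.inl (hFp _).ne')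
    exact (h3.comp x h2).deriv
  have hkey : ∀ x : ℝ, 2 * F α (x * tan θ) ^ s * deriv (fun y => F α (y * tan θ) ^ s) x
        * F α (x * tan θ) - (F α (x * tan θ) ^ s) ^ 2 * exp (-α * |x| * tan θ) * cot θ
      = c * (F α (x * tan θ) ^ (2*s) * exp (-α * |x| * tan θ)) := by
    intro x
    rw [hderivg x]
    have hF := hFp (x * tan θ)
    have e1 : F α (x*tan θ) ^ s * F α (x*tan θ) ^ (s-1) * F α (x*tan θ)
        = F α (x*tan θ) ^ (2*s) := by
      rw [← Real.rpow_add hF, ← Real.rpow_add_one hF.ne', show s+(s-1)+1 = 2*s by ring]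
    have e2 : (F α (x*tan θ) ^ s) ^ 2 = F α (x*tan θ) ^ (2*s) := by
      rw [← Real.rpow_natCast (F α (x*tan θ) ^ s) 2, ← Real.rpow_mul hF.le]
      norm_num [mul_comm]
    have e3 : exp (-α * |x * tan θ|) = exp (-α * |x| * tan θ) := by
      rw [habs x]; ring_nf
    rw [e3]
    linear_combination (2 * s * tan θ * exp (-α * |x| * tan θ)) * e1
      - cot θ * exp (-α * |x| * tan θ) * e2
  simp only [hkey]
  set H : ℝ → ℝ := fun u => if u ≤ 0 then exp ((2*s+1)*α*u) / α ^ (2*s)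
      else 2 ^ (2*s) / α ^ (2*s) * exp (-α*u) with hH
  have hApow : (0:ℝ) < α ^ (2*s) := Real.rpow_pos_of_pos hα _
  have hb : 0 < (2*s+1)*α := by positivity
  have hFH : ∀ u : ℝ, F α u ^ (2*s) * exp (-α * |u|) ≤ H u := by
    intro u
    rcases le_or_gt u 0 with hu | hu
    · simp only [hH, if_pos hu]
      rw [F_of_nonpos hα hu, abs_of_nonpos hu,
        Real.div_rpow (exp_pos _).le hα.le, ← Real.exp_mul]
      apply le_of_eq
      rw [div_mul_eq_mul_div, ← Real.exp_add]
      congr 2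
      ring
    · simp only [hH, if_neg (not_le.2 hu)]
      rw [abs_of_pos hu]
      have h1 : F α u ^ (2*s) ≤ (2/α) ^ (2*s) :=
        Real.rpow_le_rpow (hFp u).le (F_le hα u) (by positivity)
      have h2 : ((2:ℝ)/α) ^ (2*s) = 2^(2*s)/α^(2*s) :=
        Real.div_rpow (by norm_num) hα.le _
      exact mul_le_mul_of_nonneg_right (h1.trans_eq h2) (exp_pos _).le
  have HIic : IntegrableOn H (Iic 0) := by
    have h0 : IntegrableOn (fun x : ℝ => exp ((2*s+1)*α*x) / α^(2*s)) (Iic 0) :=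
      (exp_integrableOn_Iic hb 0).div_const _
    exact h0.congr_fun (fun u hu => by simp only [hH, if_pos (mem_Iic.1 hu)])
      measurableSet_Iic
  have HIoi : IntegrableOn H (Ioi 0) := by
    have h0 : IntegrableOn (fun x : ℝ => 2^(2*s)/α^(2*s) * exp (-α*x)) (Ioi 0) :=
      (exp_neg_integrableOn_Ioi 0 hα).const_mul _
    exact h0.congr_fun (fun u hu => by
      simp only [hH, if_neg (not_le.2 (mem_Ioi.1 hu))]) measurableSet_Ioi
  have hHint : Integrable H := by
    rw [← integrableOn_univ, ← Iic_union_Ioi (a := (0:ℝ))]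
    exact HIic.union HIoi
  have hHval : ∫ u, H u = 1/((2*s+1)*α*α^(2*s)) + 2^(2*s)/(α^(2*s)*α) := by
    rw [← intervalIntegral.integral_Iic_add_Ioi HIic HIoi]
    have v1 : ∫ u in Iic (0:ℝ), H u = 1/((2*s+1)*α*α^(2*s)) := by
      rw [setIntegral_congr_fun measurableSet_Iic
        (g := fun u : ℝ => exp ((2*s+1)*α*u) / α^(2*s))
        (fun u hu => by simp only [hH, if_pos (mem_Iic.1 hu)])]
      rw [integral_div, exp_integral_Iic hb 0, mul_zero, exp_zero]
      field_simp
    have v2 : ∫ u in Ioi (0:ℝ), H u = 2^(2*s)/(α^(2*s)*α) := by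
      rw [setIntegral_congr_fun measurableSet_Ioi
        (g := fun u : ℝ => 2^(2*s)/α^(2*s) * exp (-α*u))
        (fun u hu => by simp only [hH, if_neg (not_le.2 (mem_Ioi.1 hu))])]
      rw [integral_const_mul, exp_integral_Ioi α 0 hα, mul_zero, exp_zero]
      field_simp
    rw [v1, v2]
  have hcbound : |c| ≤ cos θ / sin θ := by
    have hceq : c = (cos θ/sin θ) * (2 * sin θ^2 - 1) := by
      rw [hc, hcoteq, htaneq, hs]
      field_simp
    rw [hceq, abs_mul, abs_of_pos (by positivity : (0:ℝ) < cos θ / sin θ)]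
    have h2 : |2*sin θ^2-1| ≤ 1 := by
      rw [abs_le]
      constructor
      · nlinarith [sq_nonneg (sin θ)]
      · nlinarith [sin_sq_add_cos_sq θ, sq_nonneg (cos θ)]
    nlinarith [div_pos hcos hsin]
  set G : ℝ → ℝ := fun x => (cos θ/sin θ) * H (x * tan θ) with hG
  have hGint : Integrable G := (hHint.comp_mul_right' htan.ne').const_mul _
  have hae : ∀ᵐ x : ℝ, abs ((fun t : ℝ => min 1 (max 0 (2 - |t|))) (x/n)
      * deriv (fun t : ℝ => min 1 (max 0 (2 - |t|))) (x/n)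
      * (c * (F α (x*tan θ)^(2*s) * exp (-α * |x| * tan θ)))) ≤ G x := by
    have hzero : volume ({-(2*n), -n, n, 2*n} : Set ℝ) = 0 :=
      (Set.toFinite _).measure_zero _
    filter_upwards [compl_mem_ae_iff.2 hzero] with x hx
    simp only [mem_compl_iff, mem_insert_iff, mem_singleton_iff, not_or] at hx
    obtain ⟨hx1, hx2, hx3, hx4⟩ := hx
    have hd1 : |x/n| ≠ 1 := by
      intro h
      rcases (abs_eq (by norm_num : (0:ℝ) ≤ 1)).1 h with h'|h'
      · exact hx3 (by field_simp at h'; linarith)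
      · exact hx2 (by field_simp at h'; linarith)
    have hd2 : |x/n| ≠ 2 := by
      intro h
      rcases (abs_eq (by norm_num : (0:ℝ) ≤ 2)).1 h with h'|h'
      · exact hx4 (by field_simp at h'; linarith)
      · exact hx1 (by field_simp at h'; linarith)
    have hb1 := chi_bound (x/n)
    have hb2 := chi_deriv_bound hd1 hd2
    have hEeq : -α * |x| * tan θ = -α * |x * tan θ| := by rw [habs]; ring
    have hFHx := hFH (x * tan θ)
    rw [← hEeq] at hFHx
    have hFE : (0:ℝ) ≤ F α (x*tan θ)^(2*s) * exp (-α * |x| * tan θ) :=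
      mul_nonneg (Real.rpow_nonneg (hFp _).le _) (exp_pos _).le
    rw [abs_mul, abs_mul, abs_mul, abs_of_nonneg hFE, hG]
    have hstep := mul_le_mul (mul_le_mul hb1 hb2 (abs_nonneg _) zero_le_one)
      (mul_le_mul hcbound hFHx hFE (div_pos hcos hsin).le)
      (mul_nonneg (abs_nonneg _) hFE) (by norm_num)
    exact hstep.trans_eq (by ring)
  have h1n : (0:ℝ) < 1/n := by positivity
  have habs_int : ∀ f : ℝ → ℝ, (∀ᵐ x : ℝ, |f x| ≤ G x) → |∫ x, f x| ≤ ∫ x, G x := by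
    intro f hf
    refine le_trans ?_
      (integral_mono_of_nonneg (Eventually.of_forall fun x => abs_nonneg _) hGint hf)
    simpa using norm_integral_le_integral_norm f
  rw [abs_mul, abs_of_pos h1n]
  refine le_trans (mul_le_mul_of_nonneg_left (habs_int _ hae) h1n.le) ?_
  -- compute ∫ G and finish arithmetic
  have hGval : ∫ x, G x = (cos θ/sin θ) * ((tan θ)⁻¹ *
      (1/((2*s+1)*α*α^(2*s)) + 2^(2*s)/(α^(2*s)*α))) := by
    rw [hG, integral_const_mul]
    congr 1
    rw [MeasureTheory.Measure.integral_comp_mul_right H (tan θ), smul_eq_mul,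
      abs_of_pos (inv_pos.2 htan), hHval]
  rw [hGval]
  have hA : α^(2*s+1) = α^(2*s)*α := by rw [Real.rpow_add hα, Real.rpow_one]
  have hfrac : 1/(2*s+1) ≤ 1-(2/3)*s := by
    rw [div_le_iff₀ (by positivity)]
    nlinarith
  have h2pow : (2:ℝ)^(2*s) ≤ 1+3*s := by
    have hlog : Real.log 4 = 2 * Real.log 2 := by
      rw [show (4:ℝ) = 2^(2:ℕ) by norm_num, Real.log_pow]
      push_cast; ring
    have hcvx := convexOn_exp.2 (mem_univ (Real.log 4)) (mem_univ (0:ℝ))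
      (le_of_lt hs0) (by linarith : (0:ℝ) ≤ 1 - s) (by ring)
    simp only [smul_eq_mul, mul_zero, add_zero, exp_zero] at hcvx
    rw [Real.exp_log (by norm_num : (0:ℝ) < 4)] at hcvx
    have h24 : (2:ℝ)^(2*s) = exp (s * Real.log 4) := by
      rw [Real.rpow_def_of_pos (by norm_num : (0:ℝ) < 2), hlog]
      congr 1; ring
    rw [h24]
    linarith
  have hineq : 1/((2*s+1)*α*α^(2*s)) + 2^(2*s)/(α^(2*s)*α)
      ≤ (2 + (7/3)*s)/(α^(2*s)*α) := by
    have e1 : 1/((2*s+1)*α*α^(2*s)) = (1/(2*s+1))/(α^(2*s)*α) := by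
      rw [div_div]
      congr 1
      ring
    rw [e1, ← add_div]
    exact (div_le_div_iff_of_pos_right (by positivity)).2 (by linarith)
  calc (1/n) * ((cos θ/sin θ) * ((tan θ)⁻¹ *
        (1/((2*s+1)*α*α^(2*s)) + 2^(2*s)/(α^(2*s)*α))))
      ≤ (1/n) * ((cos θ/sin θ) * ((tan θ)⁻¹ * ((2 + (7/3)*s)/(α^(2*s)*α)))) := by
        apply mul_le_mul_of_nonneg_left (mul_le_mul_of_nonneg_left
          (mul_le_mul_of_nonneg_left hineq (inv_pos.2 htan).le)
          (div_pos hcos hsin).le) h1n.le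
    _ = (72 * s + 84 * cos θ ^ 4) / (36 * α ^ (2 * s + 1) * sin θ ^ 2 * n) := by
        rw [hA, htaneq, inv_div, hs]
        have hαpow : α^(2*cos θ^2) ≠ 0 := ne_of_gt hApow
        field_simp
        ring
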